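/- Let μ be a probability measure on ℝ^p that is invariant under the map x ↦ −x, let K ∈ ℝ^{d×p}, let λ > 0, and define φ : ℝ^d → (0, +∞] by φ(a) = ∫ exp( ‖Kx + a‖² / λ ) dμ(x). Then φ(a) ≥ exp(‖a‖²/λ) · φ(0) for every a ∈ ℝ^d; in particular a = 0 is the unique minimizer of φ whenever φ(0) < ∞. -/

import Mathlib

open MeasureTheory Matrix

/-- **Symmetry lower bound for the exponentiated quadratic risk.** Let `μ` be a probability
measure on `ℝ^p` invariant under `x ↦ −x`, `K ∈ ℝ^{d×p}`, `λ > 0`, and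
`φ(a) = ∫ exp(‖Kx + a‖²/λ) dμ(x) ∈ (0, +∞]`.  Then `φ(a) ≥ exp(‖a‖²/λ) φ(0)` for every
`a`; in particular `a = 0` is the unique minimizer of `φ` whenever `φ(0) < ∞`. -/
theorem exp_quadratic_symmetric_minimizer
    (p d : ℕ) (μ : Measure (Fin p → ℝ)) [IsProbabilityMeasure μ]
    (hsymm : μ.map (fun x => -x) = μ)
    (K : Matrix (Fin d) (Fin p) ℝ) (lam : ℝ) (hlam : 0 < lam)
    (φ : (Fin d → ℝ) → ENNReal)
    (hφ : ∀ a, φ a = ∫⁻ x, ENNReal.ofReal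
        (Real.exp ((∑ i, (K.mulVec x i + a i) ^ 2) / lam)) ∂μ) :
    (∀ a : Fin d → ℝ, ENNReal.ofReal (Real.exp ((∑ i, (a i) ^ 2) / lam)) * φ 0 ≤ φ a)
    ∧ (φ 0 < ⊤ → ∀ a : Fin d → ℝ, a ≠ 0 → φ 0 < φ a) := by
  have hmeas : ∀ a : Fin d → ℝ, Measurable (fun x : Fin p → ℝ => ENNReal.ofReal
      (Real.exp ((∑ i, (K.mulVec x i + a i) ^ 2) / lam))) := by
    intro a
    apply Measurable.ennreal_ofReal
    apply Measurable.comp Real.measurable_exp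
    apply Measurable.div_const
    apply Finset.measurable_sum
    intro i _
    apply Measurable.pow_const
    apply Measurable.add_const
    simp only [mulVec, dotProduct]
    exact Finset.measurable_sum _ fun j _ => (measurable_pi_apply j).const_mul _
  -- symmetry: φ a = φ (-a)
  have hsymφ : ∀ a : Fin d → ℝ, φ a = φ (-a) := by
    intro a
    rw [hφ, hφ]
    conv_lhs => rw [← hsymm]
    rw [lintegral_map (hmeas a) measurable_neg]
    congr 1
    funext x
    congr 2
    rw [div_left_inj' (ne_of_gt hlam)]
    apply Finset.sum_congr rfl
    intro i _
    rw [mulVec_neg, Pi.neg_apply, Pi.neg_apply]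
    ring
  -- main inequality
  have hmain : ∀ a : Fin d → ℝ,
      ENNReal.ofReal (Real.exp ((∑ i, (a i) ^ 2) / lam)) * φ 0 ≤ φ a := by
    intro a
    set c : ENNReal := ENNReal.ofReal (Real.exp ((∑ i, (a i) ^ 2) / lam)) with hc
    have key : 2 * (c * φ 0) ≤ 2 * φ a := by
      have h2 : 2 * φ a = φ a + φ (-a) := by rw [← hsymφ]; ring
      rw [h2, hφ a, hφ (-a), hφ 0, ← lintegral_add_left (hmeas a)]
      have hconst : c * ∫⁻ x, ENNReal.ofReal
          (Real.exp ((∑ i, (K.mulVec x i + (0:Fin d → ℝ) i) ^ 2) / lam)) ∂μ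
          = ∫⁻ x, c * ENNReal.ofReal
          (Real.exp ((∑ i, (K.mulVec x i + (0:Fin d → ℝ) i) ^ 2) / lam)) ∂μ := by
        rw [lintegral_const_mul' _ _ ENNReal.ofReal_ne_top]
      rw [hconst, ← lintegral_const_mul' _ _ (by simp : (2:ENNReal) ≠ ⊤)]
      apply lintegral_mono
      intro x
      set u := ∑ i, (K.mulVec x i + a i) ^ 2 with hu
      set v := ∑ i, (K.mulVec x i + (-a) i) ^ 2 with hv
      have huv : u + v = 2 * ((∑ i, (K.mulVec x i + (0:Fin d → ℝ) i) ^ 2)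
          + ∑ i, (a i) ^ 2) := by
        simp only [hu, hv, Pi.neg_apply, Pi.zero_apply, add_zero,
          ← Finset.sum_add_distrib, Finset.mul_sum]
        apply Finset.sum_congr rfl
        intro i _
        ring
      have hexp : 2 * (Real.exp ((∑ i, (a i) ^ 2) / lam)
          * Real.exp ((∑ i, (K.mulVec x i + (0:Fin d → ℝ) i) ^ 2) / lam))
          ≤ Real.exp (u / lam) + Real.exp (v / lam) := by
        rw [← Real.exp_add]
        have h1 : Real.exp ((∑ i, (a i) ^ 2) / lam
            + (∑ i, (K.mulVec x i + (0:Fin d → ℝ) i) ^ 2) / lam)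
            = Real.exp (u / (2*lam)) * Real.exp (v / (2*lam)) := by
          rw [← Real.exp_add]
          congr 1
          rw [← add_div, ← add_div, huv]
          field_simp
          ring
        rw [h1]
        have e1 : Real.exp (u / lam) = Real.exp (u / (2*lam)) ^ 2 := by
          rw [← Real.exp_nat_mul]; congr 1; field_simp; ring
        have e2 : Real.exp (v / lam) = Real.exp (v / (2*lam)) ^ 2 := by
          rw [← Real.exp_nat_mul]; congr 1; field_simp; ring
        rw [e1, e2]
        nlinarith [sq_nonneg (Real.exp (u / (2*lam)) - Real.exp (v / (2*lam)))]
      calc (2:ENNReal) * (c * ENNReal.ofReal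
            (Real.exp ((∑ i, (K.mulVec x i + (0:Fin d → ℝ) i) ^ 2) / lam)))
          = ENNReal.ofReal (2 * (Real.exp ((∑ i, (a i) ^ 2) / lam)
            * Real.exp ((∑ i, (K.mulVec x i + (0:Fin d → ℝ) i) ^ 2) / lam))) := by
            rw [hc, ← ENNReal.ofReal_mul (Real.exp_nonneg _)]
            rw [show ((2:ENNReal)) = ENNReal.ofReal 2 by simp]
            rw [← ENNReal.ofReal_mul (by norm_num : (0:ℝ) ≤ 2)]
        _ ≤ ENNReal.ofReal (Real.exp (u / lam) + Real.exp (v / lam)) :=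
            ENNReal.ofReal_le_ofReal hexp
        _ = ENNReal.ofReal (Real.exp (u / lam)) + ENNReal.ofReal (Real.exp (v / lam)) :=
            ENNReal.ofReal_add (Real.exp_nonneg _) (Real.exp_nonneg _)
    exact (ENNReal.mul_le_mul_iff_right (by norm_num) (by norm_num)).1 key
  refine ⟨hmain, ?_⟩
  intro hfin a ha
  have hφ0pos : 0 < φ 0 := by
    rw [hφ 0]
    have : (1:ENNReal) = ∫⁻ _, 1 ∂μ := by simp
    calc (0:ENNReal) < 1 := by norm_num
      _ = ∫⁻ _, 1 ∂μ := this
      _ ≤ _ := lintegral_mono fun x => by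
          rw [show (1:ENNReal) = ENNReal.ofReal (Real.exp 0) by simp]
          apply ENNReal.ofReal_le_ofReal
          apply Real.exp_le_exp.2
          positivity
  have hc1 : (1:ENNReal) < ENNReal.ofReal (Real.exp ((∑ i, (a i) ^ 2) / lam)) := by
    rw [show (1:ENNReal) = ENNReal.ofReal (Real.exp 0) by simp]
    apply (ENNReal.ofReal_lt_ofReal_iff (Real.exp_pos _)).2
    apply Real.exp_lt_exp.2
    apply div_pos _ hlam
    have : ∃ i, a i ≠ 0 := by
      by_contra h
      push_neg at h
      exact ha (funext h)
    obtain ⟨i, hi⟩ := this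
    apply Finset.sum_pos' (fun j _ => sq_nonneg _) ⟨i, Finset.mem_univ i, by positivity⟩
  calc φ 0 = 1 * φ 0 := (one_mul _).symm
    _ < ENNReal.ofReal (Real.exp ((∑ i, (a i) ^ 2) / lam)) * φ 0 :=
        ENNReal.mul_lt_mul_iff_left (ne_of_gt hφ0pos) hfin.ne |>.2 hc1
    _ ≤ φ a := hmain a
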